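/- arXiv:2206.08216 — 3 statements merged into one kernel-verified Lean document; each statement's English description precedes it below -/
import Mathlib

section
/- Let λ > 0, ν > 0, let f(x; λ, ν) be the GE density, and let μ = (ψ(ν + 1) − ψ(1)) / λ be the GE mean. Then the third central moment of the GE distribution satisfies ∫₀^∞ (x − μ)³ f(x; λ, ν) dx = (ψ''(ν + 1) − ψ''(1)) / λ³, where ψ'' is the second derivative of the digamma function; consequently the skewness (ψ''(ν + 1) − ψ''(1)) / (ψ'(1) − ψ'(ν + 1))^(3/2) does not depend on the rate parameter λ. -/
open Real Set

/-- The generalized exponential (GE) density with rate `l > 0` and shape `v > 0`. -/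
noncomputable def geDensity (l v x : ℝ) : ℝ :=
  l * v * Real.exp (-(l * x)) * (1 - Real.exp (-(l * x))) ^ (v - 1)

/-- The digamma function `ψ(x) = d/dx log Γ(x)`. -/
noncomputable def digamma : ℝ → ℝ := deriv fun x => Real.log (Real.Gamma x)

/-- The trigamma function `ψ'`. -/
noncomputable def trigamma : ℝ → ℝ := deriv digamma

/-- The second derivative of the digamma function, `ψ''`. -/
noncomputable def tetragamma : ℝ → ℝ := deriv trigamma

open MeasureTheory

set_option maxHeartbeats 1000000
section GEAux

lemma analyticAt_realGamma {x : ℝ} (hx : 0 < x) : AnalyticAt ℝ Real.Gamma x := by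
  have h1 : AnalyticAt ℂ Complex.Gamma (x : ℂ) := by
    have hop : IsOpen {z : ℂ | 0 < z.re} := isOpen_lt continuous_const Complex.continuous_re
    have hd : DifferentiableOn ℂ Complex.Gamma {z : ℂ | 0 < z.re} := by
      intro z hz
      refine (Complex.differentiableAt_Gamma z fun m => ?_).differentiableWithinAt
      intro h
      rw [h] at hz
      simp only [mem_setOf_eq, Complex.neg_re, Complex.natCast_re] at hz
      have : (0:ℝ) ≤ (m:ℝ) := Nat.cast_nonneg m
      linarith
    exact hd.analyticAt (hop.mem_nhds (by simpa using hx))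
  have h2 : AnalyticAt ℝ (fun y : ℝ => (Complex.Gamma (y : ℂ)).re) x :=
    (Complex.reCLM.analyticAt _).comp ((h1.restrictScalars).comp (Complex.ofRealCLM.analyticAt x))
  have heq : (fun y : ℝ => (Complex.Gamma (y : ℂ)).re) = Real.Gamma := by
    funext y
    rw [Complex.Gamma_ofReal, Complex.ofReal_re]
  rwa [heq] at h2

lemma analyticAt_realLog {x : ℝ} (hx : 0 < x) : AnalyticAt ℝ Real.log x := by
  have h1 : AnalyticAt ℂ Complex.log (x : ℂ) :=
    analyticAt_clog (by rw [Complex.mem_slitPlane_iff]; left; simpa using hx)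
  have h2 : AnalyticAt ℝ (fun y : ℝ => (Complex.log (y : ℂ)).re) x :=
    (Complex.reCLM.analyticAt _).comp ((h1.restrictScalars).comp (Complex.ofRealCLM.analyticAt x))
  refine h2.congr ?_
  filter_upwards [isOpen_Ioi.eventually_mem (show x ∈ Ioi (0:ℝ) from hx)] with y hy
  rw [← Complex.ofReal_log (le_of_lt hy), Complex.ofReal_re]

lemma analyticOnNhd_logGamma :
    AnalyticOnNhd ℝ (fun x : ℝ => Real.log (Real.Gamma x)) (Ioi 0) := fun x hx =>
  (analyticAt_realLog (Real.Gamma_pos_of_pos hx)).comp (analyticAt_realGamma hx)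

lemma neg_log_le {w : ℝ} (hw : 0 < w) {e : ℝ} (he : 0 < e) : -Real.log w ≤ w ^ (-e) / e := by
  have h0 : 0 < w ^ (-e) := Real.rpow_pos_of_pos hw _
  have h1 := Real.log_le_sub_one_of_pos h0
  rw [Real.log_rpow hw] at h1
  rw [le_div_iff₀ he]
  nlinarith

lemma neg_log_pow_le {w : ℝ} (hw0 : 0 < w) (hw1 : w ≤ 1) (j : ℕ) {e : ℝ} (he : 0 < e) :
    (-Real.log w) ^ j ≤ e⁻¹ ^ j * w ^ (-(e * j)) := by
  have hnn : 0 ≤ -Real.log w := by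
    simpa using Real.log_nonpos (le_of_lt hw0) hw1
  have h1 : (-Real.log w) ^ j ≤ (w ^ (-e) / e) ^ j :=
    pow_le_pow_left₀ hnn (neg_log_le hw0 he) j
  refine h1.trans_eq ?_
  rw [div_pow, div_eq_mul_inv, mul_comm, ← Real.rpow_natCast (w ^ (-e)) j,
    ← Real.rpow_mul (le_of_lt hw0)]
  ring_nf

lemma contOn_aux {a b : ℝ} (j : ℕ) :
    ContinuousOn (fun u : ℝ => u ^ (a-1) * ((1-u) ^ (b-1) * (-Real.log (1-u)) ^ j))
      (Ioo (0:ℝ) 1) := by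
  apply ContinuousOn.mul
  · exact fun u hu =>
      (Real.continuousAt_rpow_const u (a-1) (Or.inl (ne_of_gt hu.1))).continuousWithinAt
  · apply ContinuousOn.mul
    · intro u hu
      have h1 : (1:ℝ) - u ≠ 0 := ne_of_gt (by linarith [hu.2])
      exact (ContinuousAt.comp (Real.continuousAt_rpow_const _ (b-1) (Or.inl h1))
        ((continuous_const.sub continuous_id).continuousAt)).continuousWithinAt
    · apply ContinuousOn.pow
      apply ContinuousOn.neg
      intro u hu
      have h1 : (1:ℝ) - u ≠ 0 := ne_of_gt (by linarith [hu.2])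
      exact (ContinuousAt.comp (Real.continuousAt_log h1)
        ((continuous_const.sub continuous_id).continuousAt)).continuousWithinAt

lemma aesm_aux {a b : ℝ} (j : ℕ) {s : Set ℝ} (hs : MeasurableSet s) (hsub : s ⊆ Ioo (0:ℝ) 1) :
    AEStronglyMeasurable (fun u : ℝ => u ^ (a-1) * ((1-u) ^ (b-1) * (-Real.log (1-u)) ^ j))
      (volume.restrict s) :=
  ((contOn_aux j).mono hsub).aestronglyMeasurable hs

lemma integrableOn_beta {a b : ℝ} (ha : 0 < a) (hb : 0 < b) :
    IntegrableOn (fun u : ℝ => u ^ (a-1) * (1-u) ^ (b-1)) (Ioo (0:ℝ) 1) := by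
  have key : ∀ {s : Set ℝ}, MeasurableSet s → s ⊆ Ioo (0:ℝ) 1 →
      AEStronglyMeasurable (fun u : ℝ => u ^ (a-1) * (1-u) ^ (b-1)) (volume.restrict s) := by
    intro s hs hsub
    have := aesm_aux (a := a) (b := b) 0 hs hsub
    simpa only [pow_zero, mul_one] using this
  have part1 : IntegrableOn (fun u : ℝ => u ^ (a-1) * (1-u) ^ (b-1)) (Ioo 0 (1/2)) := by
    have hx : IntegrableOn (fun u : ℝ => ((2:ℝ)⁻¹ ^ (b-1) + 1) * u ^ (a-1)) (Ioo (0:ℝ) (1/2)) :=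
      Integrable.const_mul ((intervalIntegral.integrableOn_Ioo_rpow_iff (by norm_num)).2
        (by linarith)) _
    refine hx.mono' (key measurableSet_Ioo (fun u hu => ⟨hu.1, by linarith [hu.2]⟩)) ?_
    filter_upwards [ae_restrict_mem measurableSet_Ioo] with u hu
    have hu0 : 0 < u := hu.1
    have hu2 : u < 1/2 := hu.2
    have h1u0 : (0:ℝ) < 1 - u := by linarith
    have hbd : (1-u) ^ (b-1) ≤ (2:ℝ)⁻¹ ^ (b-1) + 1 := by
      rcases le_total 1 b with hb1 | hb1
      · have h2 : (1-u) ^ (b-1) ≤ 1 := Real.rpow_le_one (by linarith) (by linarith) (by linarith)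
        have h3 : (0:ℝ) ≤ (2:ℝ)⁻¹ ^ (b-1) := le_of_lt (Real.rpow_pos_of_pos (by norm_num) _)
        linarith
      · have h2 : (1-u) ^ (b-1) ≤ (2:ℝ)⁻¹ ^ (b-1) :=
          Real.rpow_le_rpow_of_nonpos (by norm_num) (by linarith) (by linarith)
        linarith
    rw [Real.norm_eq_abs, abs_of_nonneg (by positivity)]
    calc u ^ (a-1) * (1-u) ^ (b-1) ≤ u ^ (a-1) * ((2:ℝ)⁻¹ ^ (b-1) + 1) :=
          mul_le_mul_of_nonneg_left hbd (le_of_lt (Real.rpow_pos_of_pos hu0 _))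
      _ = ((2:ℝ)⁻¹ ^ (b-1) + 1) * u ^ (a-1) := by ring
  have part2 : IntegrableOn (fun u : ℝ => u ^ (a-1) * (1-u) ^ (b-1)) (Ico (1/2) 1) := by
    rw [integrableOn_Ico_iff_integrableOn_Ioo]
    have hy : IntegrableOn (fun u : ℝ => ((2:ℝ)⁻¹ ^ (a-1) + 1) * (1-u) ^ (b-1))
        (Ioo (1/2:ℝ) 1) := by
      refine Integrable.const_mul ?_ _
      have h0 : IntervalIntegrable (fun x : ℝ => x ^ (b-1)) volume 0 (1/2) :=
        intervalIntegral.intervalIntegrable_rpow' (by linarith)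
      have h1 := (h0.comp_sub_left 1).symm
      norm_num at h1
      exact (intervalIntegrable_iff_integrableOn_Ioo_of_le (by norm_num)).1 h1
    refine hy.mono' (key measurableSet_Ioo (fun u hu => ⟨by linarith [hu.1], hu.2⟩)) ?_
    filter_upwards [ae_restrict_mem measurableSet_Ioo] with u hu
    have hu0 : (1/2:ℝ) < u := hu.1
    have hu1 : u < 1 := hu.2
    have h1u0 : (0:ℝ) < 1 - u := by linarith
    have hbd : u ^ (a-1) ≤ (2:ℝ)⁻¹ ^ (a-1) + 1 := by
      rcases le_total 1 a with ha1 | ha1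
      · have h2 : u ^ (a-1) ≤ 1 := Real.rpow_le_one (by linarith) (by linarith) (by linarith)
        have h3 : (0:ℝ) ≤ (2:ℝ)⁻¹ ^ (a-1) := le_of_lt (Real.rpow_pos_of_pos (by norm_num) _)
        linarith
      · have h2 : u ^ (a-1) ≤ (2:ℝ)⁻¹ ^ (a-1) :=
          Real.rpow_le_rpow_of_nonpos (by norm_num) (by linarith) (by linarith)
        linarith
    rw [Real.norm_eq_abs, abs_of_nonneg (by positivity)]
    calc u ^ (a-1) * (1-u) ^ (b-1) ≤ ((2:ℝ)⁻¹ ^ (a-1) + 1) * (1-u) ^ (b-1) :=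
          mul_le_mul_of_nonneg_right hbd (le_of_lt (Real.rpow_pos_of_pos h1u0 _))
      _ = _ := rfl
  refine (part1.union part2).mono_set ?_
  intro u hu
  rcases lt_or_ge u (1/2) with h | h
  · exact Or.inl ⟨hu.1, h⟩
  · exact Or.inr ⟨h, hu.2⟩

lemma integrableOn_core {a : ℝ} (ha : 0 < a) {b : ℝ} (hb : 0 < b) (j : ℕ) :
    IntegrableOn (fun u : ℝ => u ^ (a-1) * ((1-u) ^ (b-1) * (-Real.log (1-u)) ^ j))
      (Ioo (0:ℝ) 1) := by
  set e : ℝ := b / (2*(j+1)) with he_def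
  have he : 0 < e := by positivity
  have hmaj : IntegrableOn (fun u : ℝ => e⁻¹ ^ j * (u ^ (a-1) * (1-u) ^ (b/2-1)))
      (Ioo (0:ℝ) 1) := (integrableOn_beta ha (by linarith)).const_mul _
  refine hmaj.mono' (aesm_aux j measurableSet_Ioo (fun u hu => hu)) ?_
  filter_upwards [ae_restrict_mem measurableSet_Ioo] with u hu
  have hu0 : 0 < u := hu.1
  have h1u0 : (0:ℝ) < 1 - u := by linarith [hu.2]
  have h1u1 : (1:ℝ) - u ≤ 1 := by linarith
  have hlog : (0:ℝ) ≤ -Real.log (1-u) := by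
    simpa using Real.log_nonpos (le_of_lt h1u0) h1u1
  have hstep : (-Real.log (1-u)) ^ j ≤ e⁻¹ ^ j * (1-u) ^ (-(e*j)) :=
    neg_log_pow_le h1u0 h1u1 j he
  have hexp : (1-u) ^ (b-1) * (1-u) ^ (-(e*j)) ≤ (1-u) ^ (b/2-1) := by
    rw [← Real.rpow_add h1u0]
    apply Real.rpow_le_rpow_of_exponent_ge h1u0 h1u1
    have hj : e * j ≤ b/2 := by
      rw [he_def]
      rw [div_mul_eq_mul_div, div_le_div_iff₀ (by positivity) (by norm_num)]
      have : (j:ℝ) ≤ j + 1 := by linarith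
      nlinarith [hb, this, Nat.cast_nonneg (α := ℝ) j]
    linarith
  rw [Real.norm_eq_abs, abs_of_nonneg (by positivity)]
  calc u ^ (a-1) * ((1-u) ^ (b-1) * (-Real.log (1-u)) ^ j)
      ≤ u ^ (a-1) * ((1-u) ^ (b-1) * (e⁻¹ ^ j * (1-u) ^ (-(e*j)))) := by
        apply mul_le_mul_of_nonneg_left _ (le_of_lt (Real.rpow_pos_of_pos hu0 _))
        exact mul_le_mul_of_nonneg_left hstep (le_of_lt (Real.rpow_pos_of_pos h1u0 _))
    _ = e⁻¹ ^ j * ((1-u) ^ (b-1) * (1-u) ^ (-(e*j))) * u ^ (a-1) := by ring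
    _ ≤ e⁻¹ ^ j * (1-u) ^ (b/2-1) * u ^ (a-1) := by
        apply mul_le_mul_of_nonneg_right _ (le_of_lt (Real.rpow_pos_of_pos hu0 _))
        exact mul_le_mul_of_nonneg_left hexp (by positivity)
    _ = e⁻¹ ^ j * (u ^ (a-1) * (1-u) ^ (b/2-1)) := by ring
/-- integrand of `phi` -/
noncomputable def geCore (v : ℝ) (j : ℕ) (t : ℝ) (u : ℝ) : ℝ :=
  u ^ (v-1) * ((1-u) ^ ((1-t)-1) * (-Real.log (1-u)) ^ j)

noncomputable def gePhi (v : ℝ) (j : ℕ) (t : ℝ) : ℝ := ∫ u in Ioo (0:ℝ) 1, geCore v j t u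

lemma integrableOn_geCore {v : ℝ} (hv : 0 < v) (j : ℕ) {t : ℝ} (ht : t < 1) :
    IntegrableOn (geCore v j t) (Ioo (0:ℝ) 1) :=
  integrableOn_core hv (by linarith : (0:ℝ) < 1 - t) j

lemma aesm_geCore {v : ℝ} (j : ℕ) (t : ℝ) :
    AEStronglyMeasurable (geCore v j t) (volume.restrict (Ioo (0:ℝ) 1)) :=
  aesm_aux j measurableSet_Ioo (fun _ h => h)

lemma hasDerivAt_gePhi {v : ℝ} (hv : 0 < v) (j : ℕ) {t : ℝ}
    (ht : t ∈ Ioo (-(1:ℝ)/2) (1/2)) :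
    HasDerivAt (gePhi v j) (gePhi v (j+1) t) t := by
  have key := hasDerivAt_integral_of_dominated_loc_of_deriv_le
    (μ := volume.restrict (Ioo (0:ℝ) 1)) (x₀ := t)
    (F := fun x u => geCore v j x u) (F' := fun x u => geCore v (j+1) x u)
    (bound := fun u => geCore v (j+1) (3/4 : ℝ) u)
    (s := Metric.ball t (1/8)) (Metric.ball_mem_nhds t (by norm_num))
    (Filter.Eventually.of_forall fun x => aesm_geCore j x)
    (integrableOn_geCore hv j (by linarith [ht.2]))
    (aesm_geCore (j+1) t)
    ?_ (integrableOn_geCore hv (j+1) (by norm_num)) ?_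
  · exact key.2
  · -- bound
    filter_upwards [ae_restrict_mem measurableSet_Ioo] with u hu x hx
    have hu0 : 0 < u := hu.1
    have h1u0 : (0:ℝ) < 1 - u := by linarith [hu.2]
    have h1u1 : (1:ℝ) - u ≤ 1 := by linarith
    have hlog : (0:ℝ) ≤ -Real.log (1-u) := by
      simpa using Real.log_nonpos (le_of_lt h1u0) h1u1
    have hx34 : x ≤ 3/4 := by
      have hd := Metric.mem_ball.1 hx
      rw [Real.dist_eq] at hd
      have h5 := abs_lt.1 hd
      linarith [ht.2, h5.2]
    have hexp : (1-u) ^ ((1-x)-1) ≤ (1-u) ^ ((1-(3/4:ℝ))-1) :=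
      Real.rpow_le_rpow_of_exponent_ge h1u0 h1u1 (by linarith)
    rw [Real.norm_eq_abs, abs_of_nonneg (by unfold geCore; positivity)]
    unfold geCore
    apply mul_le_mul_of_nonneg_left _ (le_of_lt (Real.rpow_pos_of_pos hu0 _))
    exact mul_le_mul_of_nonneg_right hexp (by positivity)
  · -- differentiability
    filter_upwards [ae_restrict_mem measurableSet_Ioo] with u hu x hx
    have hu0 : 0 < u := hu.1
    have h1u0 : (0:ℝ) < 1 - u := by linarith [hu.2]
    have h0 : HasDerivAt (fun y : ℝ => (1-u) ^ ((1-y)-1))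
        (-Real.log (1-u) * (1-u) ^ ((1-x)-1)) x := by
      have h1 : HasDerivAt (fun y : ℝ => Real.log (1-u) * ((1-y)-1))
          (-Real.log (1-u)) x := by
        have : HasDerivAt (fun y : ℝ => (1-y) - 1) (-1 : ℝ) x := by
          simpa using ((hasDerivAt_id x).const_sub 1).sub_const 1
        simpa [mul_comm] using this.const_mul (Real.log (1-u))
      have h2 := (Real.hasDerivAt_exp (Real.log (1-u) * ((1-x)-1))).comp x h1
      have h3 : (fun y : ℝ => Real.exp (Real.log (1-u) * ((1-y)-1)))
          = fun y : ℝ => (1-u) ^ ((1-y)-1) := by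
        funext y
        rw [Real.rpow_def_of_pos h1u0]
      simp only [Function.comp_def] at h2
      rw [h3] at h2
      exact h2.congr_deriv (by rw [← Real.rpow_def_of_pos h1u0]; ring)
    have h4 : HasDerivAt (fun y : ℝ => geCore v j y u)
        (u ^ (v-1) * ((-Real.log (1-u) * (1-u) ^ ((1-x)-1)) * (-Real.log (1-u)) ^ j)) x := by
      unfold geCore
      exact ((h0.mul_const _).const_mul _)
    exact h4.congr_deriv (by unfold geCore; rw [pow_succ]; ring)

lemma real_beta {a b : ℝ} (ha : 0 < a) (hb : 0 < b) :
    ∫ u in Ioo (0:ℝ) 1, u ^ (a-1) * (1-u) ^ (b-1)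
      = Real.Gamma a * Real.Gamma b / Real.Gamma (a+b) := by
  have hC := Complex.Gamma_mul_Gamma_eq_betaIntegral (s := (a:ℂ)) (t := (b:ℂ))
    (by simpa using ha) (by simpa using hb)
  have hcoe : Complex.betaIntegral a b
      = ((∫ u in Ioo (0:ℝ) 1, u ^ (a-1) * (1-u) ^ (b-1) : ℝ) : ℂ) := by
    rw [Complex.betaIntegral]
    rw [show (∫ u in Ioo (0:ℝ) 1, u ^ (a-1) * (1-u) ^ (b-1) : ℝ)
        = ∫ x in (0:ℝ)..1, x ^ (a-1) * (1-x) ^ (b-1) by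
      rw [intervalIntegral.integral_of_le (by norm_num : (0:ℝ) ≤ 1),
        integral_Ioc_eq_integral_Ioo]]
    rw [← intervalIntegral.integral_ofReal]
    apply intervalIntegral.integral_congr
    intro x hx
    rw [uIcc_of_le (by norm_num : (0:ℝ) ≤ 1)] at hx
    have hx0 : (0:ℝ) ≤ x := hx.1
    have hx1 : (0:ℝ) ≤ 1 - x := by linarith [hx.2]
    push_cast [Complex.ofReal_cpow hx0, Complex.ofReal_cpow hx1]
    ring
  rw [hcoe, ← Complex.ofReal_add, Complex.Gamma_ofReal, Complex.Gamma_ofReal,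
    Complex.Gamma_ofReal, ← Complex.ofReal_mul, ← Complex.ofReal_mul] at hC
  have hC' : Real.Gamma a * Real.Gamma b
      = Real.Gamma (a+b) * ∫ u in Ioo (0:ℝ) 1, u ^ (a-1) * (1-u) ^ (b-1) :=
    Complex.ofReal_injective hC
  have hG : Real.Gamma (a+b) ≠ 0 := ne_of_gt (Real.Gamma_pos_of_pos (by linarith))
  rw [eq_div_iff hG, hC']
  ring

lemma gePhi_zero_eq {v : ℝ} (hv : 0 < v) {t : ℝ} (ht : t < 1) :
    gePhi v 0 t = Real.Gamma v * Real.Gamma (1-t) / Real.Gamma (v + (1-t)) := by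
  rw [gePhi, ← real_beta hv (by linarith : (0:ℝ) < 1-t)]
  apply setIntegral_congr_fun measurableSet_Ioo
  intro u hu
  unfold geCore
  rw [pow_zero, mul_one]
-- derivative facts
lemma analyticOnNhd_digamma : AnalyticOnNhd ℝ digamma (Ioi 0) := by
  have : digamma = deriv fun x : ℝ => Real.log (Real.Gamma x) := rfl
  rw [this]
  exact analyticOnNhd_logGamma.deriv_of_isOpen isOpen_Ioi

lemma analyticOnNhd_trigamma : AnalyticOnNhd ℝ trigamma (Ioi 0) := by
  have : trigamma = deriv digamma := rfl
  rw [this]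
  exact analyticOnNhd_digamma.deriv_of_isOpen isOpen_Ioi

lemma hasDerivAt_logGamma {x : ℝ} (hx : 0 < x) :
    HasDerivAt (fun x : ℝ => Real.log (Real.Gamma x)) (digamma x) x :=
  ((analyticOnNhd_logGamma x hx).differentiableAt).hasDerivAt

lemma hasDerivAt_digamma {x : ℝ} (hx : 0 < x) :
    HasDerivAt digamma (trigamma x) x :=
  ((analyticOnNhd_digamma x hx).differentiableAt).hasDerivAt

lemma hasDerivAt_trigamma {x : ℝ} (hx : 0 < x) :
    HasDerivAt trigamma (tetragamma x) x :=
  ((analyticOnNhd_trigamma x hx).differentiableAt).hasDerivAt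

-- the W-functions
noncomputable def geW (v t : ℝ) : ℝ :=
  Real.log (Real.Gamma (1-t)) - Real.log (Real.Gamma (v+1-t)) + Real.log (Real.Gamma (v+1))
noncomputable def geW1 (v t : ℝ) : ℝ := -digamma (1-t) + digamma (v+1-t)
noncomputable def geW2 (v t : ℝ) : ℝ := trigamma (1-t) - trigamma (v+1-t)
noncomputable def geW3 (v t : ℝ) : ℝ := -tetragamma (1-t) + tetragamma (v+1-t)

section W
variable {v t : ℝ} (hv : 0 < v) (ht : t ∈ Ioo (-(1:ℝ)/2) (1/2))

lemma inner1 : HasDerivAt (fun t : ℝ => 1 - t) (-1 : ℝ) t := by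
  simpa using (hasDerivAt_id t).const_sub 1

lemma inner2 : HasDerivAt (fun t : ℝ => v+1-t) (-1 : ℝ) t := by
  simpa using (hasDerivAt_id t).const_sub (v+1)

include hv ht

lemma pos1 : (0:ℝ) < 1 - t := by have := ht.2; linarith
lemma pos2 : (0:ℝ) < v+1-t := by have := ht.2; linarith

lemma hasDerivAt_geW : HasDerivAt (geW v) (geW1 v t) t := by
  have h1 := (hasDerivAt_logGamma (pos1 hv ht)).comp t inner1
  have h2 := (hasDerivAt_logGamma (pos2 hv ht)).comp t inner2
  have := (h1.sub h2).add_const (Real.log (Real.Gamma (v+1)))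
  exact this.congr_deriv (by unfold geW1; ring)

lemma hasDerivAt_geW1 : HasDerivAt (geW1 v) (geW2 v t) t := by
  have h1 := (hasDerivAt_digamma (pos1 hv ht)).comp t inner1
  have h2 := (hasDerivAt_digamma (pos2 hv ht)).comp t inner2
  have := (h1.neg).add h2
  exact this.congr_deriv (by unfold geW2; ring)

lemma hasDerivAt_geW2 : HasDerivAt (geW2 v) (geW3 v t) t := by
  have h1 := (hasDerivAt_trigamma (pos1 hv ht)).comp t inner1
  have h2 := (hasDerivAt_trigamma (pos2 hv ht)).comp t inner2
  have := h1.sub h2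
  exact this.congr_deriv (by unfold geW3; ring)

lemma geKey0 : v * gePhi v 0 t = Real.exp (geW v t) := by
  have h2 := ht.2
  rw [gePhi_zero_eq hv (by linarith : t < 1)]
  unfold geW
  have hG1 : 0 < Real.Gamma (1-t) := Real.Gamma_pos_of_pos (pos1 hv ht)
  have hG2 : 0 < Real.Gamma (v+1-t) := Real.Gamma_pos_of_pos (pos2 hv ht)
  have hG3 : 0 < Real.Gamma (v+1) := Real.Gamma_pos_of_pos (by linarith)
  have hGv : 0 < Real.Gamma v := Real.Gamma_pos_of_pos hv
  rw [Real.exp_add, Real.exp_sub, Real.exp_log hG1, Real.exp_log hG2, Real.exp_log hG3]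
  rw [show v + (1-t) = v+1-t by ring]
  rw [show Real.Gamma (v+1) = v * Real.Gamma v from by
    rw [Real.Gamma_add_one (ne_of_gt hv)]]
  field_simp

lemma geKey1 : v * gePhi v 1 t = geW1 v t * Real.exp (geW v t) := by
  have hA : HasDerivAt (fun s => v * gePhi v 0 s) (v * gePhi v 1 t) t :=
    (hasDerivAt_gePhi hv 0 ht).const_mul v
  have hB : HasDerivAt (fun s => Real.exp (geW v s)) (Real.exp (geW v t) * geW1 v t) t := by
    have := (Real.hasDerivAt_exp (geW v t)).comp t (hasDerivAt_geW hv ht)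
    simpa [Function.comp_def] using this
  have hmem : Ioo (-(1:ℝ)/2) (1/2) ∈ nhds t := isOpen_Ioo.mem_nhds ht
  have hEq : (fun s => v * gePhi v 0 s) =ᶠ[nhds t] fun s => Real.exp (geW v s) := by
    filter_upwards [hmem] with s hs
    exact geKey0 hv hs
  have hB' : HasDerivAt (fun s => v * gePhi v 0 s) (Real.exp (geW v t) * geW1 v t) t :=
    hB.congr_of_eventuallyEq hEq
  have := hA.unique hB'
  rw [this]; ring

lemma geKey2 : v * gePhi v 2 t = (geW2 v t + (geW1 v t)^2) * Real.exp (geW v t) := by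
  have hA : HasDerivAt (fun s => v * gePhi v 1 s) (v * gePhi v 2 t) t :=
    (hasDerivAt_gePhi hv 1 ht).const_mul v
  have hExp : HasDerivAt (fun s => Real.exp (geW v s)) (Real.exp (geW v t) * geW1 v t) t := by
    have := (Real.hasDerivAt_exp (geW v t)).comp t (hasDerivAt_geW hv ht)
    simpa [Function.comp_def] using this
  have hB : HasDerivAt (fun s => geW1 v s * Real.exp (geW v s))
      (geW2 v t * Real.exp (geW v t) + geW1 v t * (Real.exp (geW v t) * geW1 v t)) t :=
    (hasDerivAt_geW1 hv ht).mul hExp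
  have hmem : Ioo (-(1:ℝ)/2) (1/2) ∈ nhds t := isOpen_Ioo.mem_nhds ht
  have hEq : (fun s => v * gePhi v 1 s) =ᶠ[nhds t] fun s => geW1 v s * Real.exp (geW v s) := by
    filter_upwards [hmem] with s hs
    exact geKey1 hv hs
  have hB' := hB.congr_of_eventuallyEq hEq
  have := hA.unique hB'
  rw [this]; ring

lemma geKey3 : v * gePhi v 3 t
    = (geW3 v t + 3 * geW1 v t * geW2 v t + (geW1 v t)^3) * Real.exp (geW v t) := by
  have hA : HasDerivAt (fun s => v * gePhi v 2 s) (v * gePhi v 3 t) t :=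
    (hasDerivAt_gePhi hv 2 ht).const_mul v
  have hExp : HasDerivAt (fun s => Real.exp (geW v s)) (Real.exp (geW v t) * geW1 v t) t := by
    have := (Real.hasDerivAt_exp (geW v t)).comp t (hasDerivAt_geW hv ht)
    simpa [Function.comp_def] using this
  have hsq : HasDerivAt (fun s => (geW1 v s)^2) (2 * geW1 v t * geW2 v t) t := by
    have := ((hasDerivAt_geW1 hv ht).pow 2)
    exact this.congr_deriv (by simp [mul_comm, mul_assoc, mul_left_comm])
  have hB : HasDerivAt (fun s => (geW2 v s + (geW1 v s)^2) * Real.exp (geW v s))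
      ((geW3 v t + 2 * geW1 v t * geW2 v t) * Real.exp (geW v t)
        + (geW2 v t + (geW1 v t)^2) * (Real.exp (geW v t) * geW1 v t)) t :=
    ((hasDerivAt_geW2 hv ht).add hsq).mul hExp
  have hmem : Ioo (-(1:ℝ)/2) (1/2) ∈ nhds t := isOpen_Ioo.mem_nhds ht
  have hEq : (fun s => v * gePhi v 2 s)
      =ᶠ[nhds t] fun s => (geW2 v s + (geW1 v s)^2) * Real.exp (geW v s) := by
    filter_upwards [hmem] with s hs
    exact geKey2 hv hs
  have hB' := hB.congr_of_eventuallyEq hEq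
  have := hA.unique hB'
  rw [this]; ring

end W

-- evaluation at 0
lemma geW_zero {v : ℝ} : geW v 0 = 0 := by
  unfold geW; rw [sub_zero, sub_zero]
  simp [Real.Gamma_one]

lemma geW1_zero {v : ℝ} : geW1 v 0 = digamma (v+1) - digamma 1 := by
  unfold geW1; rw [sub_zero, sub_zero]; ring

lemma geW2_zero {v : ℝ} : geW2 v 0 = trigamma 1 - trigamma (v+1) := by
  unfold geW2; rw [sub_zero, sub_zero]

lemma geW3_zero {v : ℝ} : geW3 v 0 = tetragamma (v+1) - tetragamma 1 := by
  unfold geW3; rw [sub_zero, sub_zero]; ring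

lemma geMoments {v : ℝ} (hv : 0 < v) :
    v * gePhi v 0 0 = 1 ∧
    v * gePhi v 1 0 = digamma (v+1) - digamma 1 ∧
    v * gePhi v 2 0 = (trigamma 1 - trigamma (v+1)) + (digamma (v+1) - digamma 1)^2 ∧
    v * gePhi v 3 0 = (tetragamma (v+1) - tetragamma 1)
      + 3 * (digamma (v+1) - digamma 1) * (trigamma 1 - trigamma (v+1))
      + (digamma (v+1) - digamma 1)^3 := by
  have h0 : (0:ℝ) ∈ Ioo (-(1:ℝ)/2) (1/2) := by constructor <;> norm_num
  refine ⟨?_, ?_, ?_, ?_⟩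
  · rw [geKey0 hv h0, geW_zero, Real.exp_zero]
  · rw [geKey1 hv h0, geW_zero, Real.exp_zero, geW1_zero]; ring
  · rw [geKey2 hv h0, geW_zero, Real.exp_zero, geW1_zero, geW2_zero]; ring
  · rw [geKey3 hv h0, geW_zero, Real.exp_zero, geW1_zero, geW2_zero, geW3_zero]; ring

end GEAux

-- change of variables
lemma ge_cov {l v : ℝ} (hl : 0 < l) (hv : 0 < v) (μ : ℝ) (k : ℕ) :
    ∫ x in Ioi (0:ℝ), (x - μ)^k * geDensity l v x
      = ∫ u in Ioo (0:ℝ) 1, ((-Real.log (1-u))/l - μ)^k * (v * u^(v-1)) := by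
  set f : ℝ → ℝ := fun x => 1 - Real.exp (-(l * x)) with hf_def
  set g : ℝ → ℝ := fun u => ((-Real.log (1-u))/l - μ)^k * (v * u^(v-1)) with hg_def
  have himg : f '' Ioi 0 = Ioo 0 1 := by
    apply Subset.antisymm
    · rintro _ ⟨x, hx, rfl⟩
      have hx0 : (0:ℝ) < x := hx
      have h1 : Real.exp (-(l * x)) < 1 := Real.exp_lt_one_iff.2 (by nlinarith)
      have h2 : 0 < Real.exp (-(l * x)) := Real.exp_pos _
      exact ⟨by simp only [hf_def]; linarith, by simp only [hf_def]; linarith⟩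
    · rintro y hy
      refine ⟨-Real.log (1 - y) / l, ?_, ?_⟩
      · have hlog : Real.log (1 - y) < 0 :=
          Real.log_neg (by linarith [hy.2]) (by linarith [hy.1])
        exact div_pos (by linarith) hl
      · simp only [hf_def]
        rw [show -(l * (-Real.log (1 - y) / l)) = Real.log (1 - y) by field_simp]
        rw [Real.exp_log (by linarith [hy.2])]
        ring
  have hderiv : ∀ x ∈ Ioi (0:ℝ), HasDerivWithinAt f (l * Real.exp (-(l * x))) (Ioi 0) x := by
    intro x _
    have h1 : HasDerivAt (fun x : ℝ => -(l * x)) (-l) x := by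
      exact ((hasDerivAt_id x).const_mul l).neg.congr_deriv (by simp)
    have h2 := (Real.hasDerivAt_exp (-(l * x))).comp x h1
    have h3 : HasDerivAt f (-(Real.exp (-(l * x)) * -l)) x := by
      simpa [hf_def, Function.comp_def] using (h2.const_sub 1)
    have h4 : HasDerivAt f (l * Real.exp (-(l * x))) x := by convert h3 using 1; ring
    exact h4.hasDerivWithinAt
  have hinj : InjOn f (Ioi 0) := by
    have hmono : StrictMonoOn f (Ioi 0) := by
      intro x _ y _ hxy
      simp only [hf_def]
      have : Real.exp (-(l * y)) < Real.exp (-(l * x)) :=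
        Real.exp_lt_exp.2 (by nlinarith)
      linarith
    exact hmono.injOn
  have key := integral_image_eq_integral_abs_deriv_smul measurableSet_Ioi hderiv hinj g
  rw [himg] at key
  rw [key]
  apply setIntegral_congr_fun measurableSet_Ioi
  intro x hx
  have hx0 : (0:ℝ) < x := hx
  have hexp0 : 0 < Real.exp (-(l * x)) := Real.exp_pos _
  have hexp1 : Real.exp (-(l * x)) < 1 := Real.exp_lt_one_iff.2 (by nlinarith)
  simp only [hg_def, hf_def, smul_eq_mul]
  rw [show (1:ℝ) - (1 - Real.exp (-(l * x))) = Real.exp (-(l * x)) by ring]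
  rw [Real.log_exp]
  rw [abs_of_pos (by positivity)]
  rw [show -(-(l * x)) / l - μ = x - μ by field_simp]
  unfold geDensity
  ring

lemma geCentral {v : ℝ} (hv : 0 < v) (m : ℝ) :
    ((∫ u in Ioo (0:ℝ) 1, ((-Real.log (1-u)) - m)^2 * (v * u^(v-1)))
       = v * gePhi v 2 0 - 2*m*(v * gePhi v 1 0) + m^2*(v * gePhi v 0 0)) ∧
    ((∫ u in Ioo (0:ℝ) 1, ((-Real.log (1-u)) - m)^3 * (v * u^(v-1)))
       = v * gePhi v 3 0 - 3*m*(v * gePhi v 2 0) + 3*m^2*(v * gePhi v 1 0)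
          - m^3*(v * gePhi v 0 0)) := by
  have hI : ∀ j : ℕ, IntegrableOn (geCore v j 0) (Ioo (0:ℝ) 1) :=
    fun j => integrableOn_geCore hv j one_pos
  have hval : ∀ (j : ℕ) (u : ℝ), u ∈ Ioo (0:ℝ) 1 →
      geCore v j 0 u = u^(v-1) * (-Real.log (1-u))^j := by
    intro j u hu
    unfold geCore
    rw [show ((1:ℝ)-0)-1 = 0 by ring, Real.rpow_zero, one_mul]
  have hphi : ∀ (j : ℕ) (c : ℝ),
      (∫ u in Ioo (0:ℝ) 1, c * geCore v j 0 u) = c * gePhi v j 0 := by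
    intro j c
    rw [gePhi, integral_const_mul]
  constructor
  · have hcong : ∀ u ∈ Ioo (0:ℝ) 1,
        ((-Real.log (1-u)) - m)^2 * (v * u^(v-1))
          = v * geCore v 2 0 u + ((-(2*m*v)) * geCore v 1 0 u
            + (m^2*v) * geCore v 0 0 u) := by
      intro u hu
      rw [hval 2 u hu, hval 1 u hu, hval 0 u hu]
      ring
    rw [setIntegral_congr_fun measurableSet_Ioo hcong]
    have e1 : (∫ u in Ioo (0:ℝ) 1, (v * geCore v 2 0 u + ((-(2*m*v)) * geCore v 1 0 u
          + (m^2*v) * geCore v 0 0 u)))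
        = (∫ u in Ioo (0:ℝ) 1, v * geCore v 2 0 u)
          + ((∫ u in Ioo (0:ℝ) 1, (-(2*m*v)) * geCore v 1 0 u)
            + (∫ u in Ioo (0:ℝ) 1, (m^2*v) * geCore v 0 0 u)) := by
      rw [← integral_add ((hI 1).const_mul _) ((hI 0).const_mul _)]
      exact integral_add ((hI 2).const_mul _) (((hI 1).const_mul _).add ((hI 0).const_mul _))
    rw [e1, hphi, hphi, hphi]
    ring
  · have hcong : ∀ u ∈ Ioo (0:ℝ) 1,
        ((-Real.log (1-u)) - m)^3 * (v * u^(v-1))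
          = v * geCore v 3 0 u + ((-(3*m*v)) * geCore v 2 0 u
            + ((3*m^2*v) * geCore v 1 0 u + (-(m^3*v)) * geCore v 0 0 u)) := by
      intro u hu
      rw [hval 3 u hu, hval 2 u hu, hval 1 u hu, hval 0 u hu]
      ring
    rw [setIntegral_congr_fun measurableSet_Ioo hcong]
    have e1 : (∫ u in Ioo (0:ℝ) 1, (v * geCore v 3 0 u + ((-(3*m*v)) * geCore v 2 0 u
          + ((3*m^2*v) * geCore v 1 0 u + (-(m^3*v)) * geCore v 0 0 u))))
        = (∫ u in Ioo (0:ℝ) 1, v * geCore v 3 0 u)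
          + ((∫ u in Ioo (0:ℝ) 1, (-(3*m*v)) * geCore v 2 0 u)
            + ((∫ u in Ioo (0:ℝ) 1, (3*m^2*v) * geCore v 1 0 u)
              + (∫ u in Ioo (0:ℝ) 1, (-(m^3*v)) * geCore v 0 0 u))) := by
      have eA : (∫ u in Ioo (0:ℝ) 1, ((3*m^2*v) * geCore v 1 0 u + (-(m^3*v)) * geCore v 0 0 u))
          = (∫ u in Ioo (0:ℝ) 1, (3*m^2*v) * geCore v 1 0 u)
            + (∫ u in Ioo (0:ℝ) 1, (-(m^3*v)) * geCore v 0 0 u) :=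
        integral_add ((hI 1).const_mul _) ((hI 0).const_mul _)
      have eB : (∫ u in Ioo (0:ℝ) 1, ((-(3*m*v)) * geCore v 2 0 u
            + ((3*m^2*v) * geCore v 1 0 u + (-(m^3*v)) * geCore v 0 0 u)))
          = (∫ u in Ioo (0:ℝ) 1, (-(3*m*v)) * geCore v 2 0 u)
            + (∫ u in Ioo (0:ℝ) 1, ((3*m^2*v) * geCore v 1 0 u + (-(m^3*v)) * geCore v 0 0 u)) :=
        integral_add ((hI 2).const_mul _) (((hI 1).const_mul _).add ((hI 0).const_mul _))
      have eC : (∫ u in Ioo (0:ℝ) 1, (v * geCore v 3 0 u + ((-(3*m*v)) * geCore v 2 0 u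
            + ((3*m^2*v) * geCore v 1 0 u + (-(m^3*v)) * geCore v 0 0 u))))
          = (∫ u in Ioo (0:ℝ) 1, v * geCore v 3 0 u)
            + (∫ u in Ioo (0:ℝ) 1, ((-(3*m*v)) * geCore v 2 0 u
              + ((3*m^2*v) * geCore v 1 0 u + (-(m^3*v)) * geCore v 0 0 u))) :=
        integral_add ((hI 3).const_mul _) (((hI 2).const_mul _).add
          (((hI 1).const_mul _).add ((hI 0).const_mul _)))
      rw [eC, eB, eA]
    rw [e1, hphi, hphi, hphi, hphi]
    ring

/-- The third central moment of the GE distribution is `(ψ''(ν+1) − ψ''(1)) / λ³`, and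
consequently the skewness (third central moment over variance to the power 3/2) equals
`(ψ''(ν+1) − ψ''(1)) / (ψ'(1) − ψ'(ν+1))^(3/2)`, which does not depend on `λ`. -/
theorem ge_third_central_moment_and_skewness (l v : ℝ) (hl : 0 < l) (hv : 0 < v)
    (μ : ℝ) (hμ : μ = (digamma (v + 1) - digamma 1) / l) :
    (∫ x in Ioi (0 : ℝ), (x - μ) ^ 3 * geDensity l v x =
        (tetragamma (v + 1) - tetragamma 1) / l ^ 3) ∧
    (∫ x in Ioi (0 : ℝ), (x - μ) ^ 3 * geDensity l v x) /
        (∫ x in Ioi (0 : ℝ), (x - μ) ^ 2 * geDensity l v x) ^ ((3 : ℝ) / 2) =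
      (tetragamma (v + 1) - tetragamma 1) /
        (trigamma 1 - trigamma (v + 1)) ^ ((3 : ℝ) / 2) := by
  set m : ℝ := digamma (v + 1) - digamma 1 with hm_def
  set s2 : ℝ := trigamma 1 - trigamma (v + 1) with hs2_def
  set s3 : ℝ := tetragamma (v + 1) - tetragamma 1 with hs3_def
  obtain ⟨hM0, hM1, hM2, hM3⟩ := geMoments hv
  obtain ⟨hC2, hC3⟩ := geCentral hv m
  have hC2' : (∫ u in Ioo (0:ℝ) 1, ((-Real.log (1-u)) - m)^2 * (v * u^(v-1))) = s2 := by
    rw [hC2, hM2, hM1, hM0]; ring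
  have hC3' : (∫ u in Ioo (0:ℝ) 1, ((-Real.log (1-u)) - m)^3 * (v * u^(v-1))) = s3 := by
    rw [hC3, hM3, hM2, hM1, hM0]; ring
  have hs2nn : 0 ≤ s2 := by
    rw [← hC2']
    apply setIntegral_nonneg measurableSet_Ioo
    intro u hu
    have h1 : (0:ℝ) ≤ u ^ (v-1) := Real.rpow_nonneg (le_of_lt hu.1) _
    positivity
  have hcov : ∀ k : ℕ, (∫ x in Ioi (0:ℝ), (x - μ)^k * geDensity l v x)
      = (∫ u in Ioo (0:ℝ) 1, ((-Real.log (1-u)) - m)^k * (v * u^(v-1))) / l^k := by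
    intro k
    rw [ge_cov hl hv μ k]
    rw [eq_div_iff (by positivity : (l:ℝ)^k ≠ 0)]
    rw [← integral_mul_const]
    apply setIntegral_congr_fun measurableSet_Ioo
    intro u hu
    dsimp only
    rw [hμ]
    rw [show (-Real.log (1-u))/l - m/l = ((-Real.log (1-u)) - m)/l by ring, div_pow]
    have hlk : (l:ℝ)^k ≠ 0 := by positivity
    field_simp
  have h3 : (∫ x in Ioi (0:ℝ), (x - μ)^3 * geDensity l v x) = s3 / l^3 := by
    rw [hcov 3, hC3']
  have h2 : (∫ x in Ioi (0:ℝ), (x - μ)^2 * geDensity l v x) = s2 / l^2 := by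
    rw [hcov 2, hC2']
  refine ⟨h3, ?_⟩
  rw [h3, h2]
  have hl2 : ((l^2 : ℝ)) ^ ((3:ℝ)/2) = l^3 := by
    rw [← Real.rpow_natCast l 2, ← Real.rpow_mul hl.le]
    norm_num
  have hdiv : (s2/l^2) ^ ((3:ℝ)/2) = s2 ^ ((3:ℝ)/2) / l^3 := by
    rw [Real.div_rpow hs2nn (by positivity), hl2]
  rw [hdiv]
  rcases eq_or_ne (s2 ^ ((3:ℝ)/2)) 0 with h | h
  · rw [h]; simp
  · have hl3 : (l:ℝ)^3 ≠ 0 := by positivity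
    field_simp
end

section
/- Let α ≥ 0, λ > 0, and ν > max(1, α/(1 + α)), let f(x; λ, ν) be the GE density, and let u_ν(x) = 1/ν + log(1 − exp(−λx)) be the score function with respect to ν. Then ∫₀^∞ u_ν(x) f(x; λ, ν)^(1+α) dx = λ^α ν^α B(1 + α, (1 + α)(ν − 1) + 1) (1 + ν (ψ((1 + α)(ν − 1) + 1) − ψ((1 + α)ν + 1))). -/
open Real Set MeasureTheory

/-- The GE score function with respect to the shape parameter `ν`. -/
noncomputable def geScoreShape (l v x : ℝ) : ℝ :=
  1 / v + Real.log (1 - Real.exp (-(l * x)))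

/-- The real Beta function `B(a, b) = Γ(a)Γ(b)/Γ(a+b)`. -/
noncomputable def realBeta (a b : ℝ) : ℝ :=
  Real.Gamma a * Real.Gamma b / Real.Gamma (a + b)

section helpers

lemma integrableOn_rpow_Ioo {c : ℝ} (hc : 0 < c) :
    IntegrableOn (fun t : ℝ => t ^ (c - 1)) (Ioo (0:ℝ) 1) := by
  have := (intervalIntegral.intervalIntegrable_rpow' (a := 0) (b := 1) (r := c - 1)
    (by linarith)).1
  exact this.mono_set Ioo_subset_Ioc_self

lemma measAux (f : ℝ → ℝ) (hf : ContinuousOn f (Ioo (0:ℝ) 1)) :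
    AEStronglyMeasurable f (volume.restrict (Ioo (0:ℝ) 1)) :=
  hf.aestronglyMeasurable measurableSet_Ioo

lemma contOn_beta (r u : ℝ) :
    ContinuousOn (fun t : ℝ => t ^ r * (1 - t) ^ u) (Ioo (0:ℝ) 1) := by
  intro t ht
  apply ContinuousAt.continuousWithinAt
  exact (Real.continuousAt_rpow_const t r (Or.inl (ne_of_gt ht.1))).mul
    ((Real.continuousAt_rpow_const (1 - t) u (Or.inl (by simp; linarith [ht.2]))).comp
      (by fun_prop))

lemma contOn_logbeta (r u : ℝ) :
    ContinuousOn (fun t : ℝ => Real.log t * (t ^ r * (1 - t) ^ u)) (Ioo (0:ℝ) 1) := by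
  intro t ht
  exact ((Real.continuousAt_log ht.1.ne').continuousWithinAt).mul (contOn_beta r u t ht)

lemma realBeta_integral {p q : ℝ} (hp : 0 < p) (hq : 0 < q) :
    ∫ t in Ioo (0:ℝ) 1, t ^ (p - 1) * (1 - t) ^ (q - 1) = realBeta p q := by
  have hG : Real.Gamma (p + q) ≠ 0 := (Real.Gamma_pos_of_pos (by linarith)).ne'
  have key : Complex.betaIntegral p q =
      ((∫ t in (0:ℝ)..1, t ^ (p - 1) * (1 - t) ^ (q - 1) : ℝ) : ℂ) := by
    rw [Complex.betaIntegral, ← intervalIntegral.integral_ofReal]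
    refine intervalIntegral.integral_congr fun x hx => ?_
    rw [uIcc_of_le (by norm_num : (0:ℝ) ≤ 1)] at hx
    have e1 : ((x ^ (p - 1) : ℝ) : ℂ) = (x:ℂ) ^ ((p:ℂ) - 1) := by
      rw [Complex.ofReal_cpow hx.1]; push_cast; ring_nf
    have e2 : (((1 - x) ^ (q - 1) : ℝ) : ℂ) = (1 - (x:ℂ)) ^ ((q:ℂ) - 1) := by
      rw [Complex.ofReal_cpow (by linarith [hx.2])]; push_cast; ring_nf
    push_cast
    rw [← e1, ← e2]
  have hβ := Complex.Gamma_mul_Gamma_eq_betaIntegral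
    (by simpa using hp : 0 < (p:ℂ).re) (by simpa using hq : 0 < (q:ℂ).re)
  rw [key] at hβ
  have : ((Real.Gamma p * Real.Gamma q : ℝ) : ℂ) =
      ((Real.Gamma (p + q) * ∫ t in (0:ℝ)..1, t ^ (p - 1) * (1 - t) ^ (q - 1) : ℝ) : ℂ) := by
    push_cast
    rw [← Complex.Gamma_ofReal p, ← Complex.Gamma_ofReal q, ← Complex.Gamma_ofReal (p + q),
      Complex.ofReal_add]
    exact hβ
  have h2 : Real.Gamma p * Real.Gamma q =
      Real.Gamma (p + q) * ∫ t in (0:ℝ)..1, t ^ (p - 1) * (1 - t) ^ (q - 1) :=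
    Complex.ofReal_inj.mp this
  rw [intervalIntegral.integral_of_le (by norm_num : (0:ℝ) ≤ 1),
    MeasureTheory.integral_Ioc_eq_integral_Ioo] at h2
  rw [realBeta, eq_div_iff hG, mul_comm]
  exact h2.symm

lemma realBeta_symm (a b : ℝ) : realBeta a b = realBeta b a := by
  rw [realBeta, realBeta, add_comm, mul_comm (Real.Gamma a)]

lemma diffGamma {x : ℝ} (hx : 0 < x) : DifferentiableAt ℝ Real.Gamma x :=
  Real.differentiableAt_Gamma (fun m => by
    have : (0:ℝ) ≤ m := Nat.cast_nonneg m
    intro h; rw [h] at hx; linarith)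

lemma digamma_eq {x : ℝ} (hx : 0 < x) :
    digamma x = deriv Real.Gamma x / Real.Gamma x := by
  have hΓ : Real.Gamma x ≠ 0 := (Real.Gamma_pos_of_pos hx).ne'
  have h : HasDerivAt (fun y => Real.log (Real.Gamma y))
      ((Real.Gamma x)⁻¹ * deriv Real.Gamma x) x :=
    (Real.hasDerivAt_log hΓ).comp x (diffGamma hx).hasDerivAt
  rw [digamma, h.deriv, div_eq_inv_mul]

lemma hasDerivAt_realBeta {p q : ℝ} (hp : 0 < p) (hq : 0 < q) :
    HasDerivAt (fun s => realBeta s q)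
      (realBeta p q * (digamma p - digamma (p + q))) p := by
  have hpq : 0 < p + q := by linarith
  have hΓp : Real.Gamma p ≠ 0 := (Real.Gamma_pos_of_pos hp).ne'
  have hΓq : Real.Gamma q ≠ 0 := (Real.Gamma_pos_of_pos hq).ne'
  have hΓpq : Real.Gamma (p + q) ≠ 0 := (Real.Gamma_pos_of_pos hpq).ne'
  have h1 : HasDerivAt (fun s => Real.Gamma s * Real.Gamma q)
      (deriv Real.Gamma p * Real.Gamma q) p :=
    (diffGamma hp).hasDerivAt.mul_const _
  have h2 : HasDerivAt (fun s => Real.Gamma (s + q)) (deriv Real.Gamma (p + q)) p := by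
    exact ((diffGamma hpq).hasDerivAt.comp p ((hasDerivAt_id p).add_const q)).congr_deriv (mul_one _)
  have h3 := h1.div h2 hΓpq
  refine h3.congr_deriv ?_
  rw [digamma_eq hp, digamma_eq hpq, realBeta]
  field_simp

lemma neg_log_le_s9 {t b : ℝ} (ht : 0 < t) (hb : 0 < b) :
    -Real.log t ≤ b⁻¹ * t ^ (-b) := by
  have h1 : Real.log (t ^ (-b)) = -b * Real.log t := Real.log_rpow ht _
  have h2 : Real.log (t ^ (-b)) ≤ t ^ (-b) - 1 :=
    Real.log_le_sub_one_of_pos (Real.rpow_pos_of_pos ht _)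
  have h3 : (0:ℝ) < t ^ (-b) := Real.rpow_pos_of_pos ht _
  have : -Real.log t = b⁻¹ * Real.log (t ^ (-b)) := by
    rw [h1]; field_simp
  rw [this]
  have h4 : b⁻¹ * Real.log (t ^ (-b)) ≤ b⁻¹ * (t ^ (-b) - 1) := by
    gcongr
  nlinarith [inv_pos.mpr hb]

lemma hasDerivAt_rpow_exponent (t : ℝ) (ht : 0 < t) (s : ℝ) :
    HasDerivAt (fun s : ℝ => t ^ (s - 1)) (Real.log t * t ^ (s - 1)) s := by
  have h0 : (fun s : ℝ => t ^ (s - 1)) = fun s => Real.exp (Real.log t * (s - 1)) := by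
    funext s; rw [Real.rpow_def_of_pos ht]
  rw [h0]
  have h1 : HasDerivAt (fun s : ℝ => Real.log t * (s - 1)) (Real.log t) s := by
    simpa using ((hasDerivAt_id s).sub_const 1).const_mul (Real.log t)
  have := (Real.hasDerivAt_exp (Real.log t * (s - 1))).comp s h1
  refine this.congr_deriv ?_
  rw [← Real.rpow_def_of_pos ht]
  ring

set_option maxHeartbeats 1000000 in
lemma hasDerivAt_G {p q : ℝ} (hp : 0 < p) (hq : 1 ≤ q) :
    IntegrableOn (fun t => Real.log t * (t ^ (p - 1) * (1 - t) ^ (q - 1))) (Ioo (0:ℝ) 1) ∧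
    HasDerivAt (fun s => ∫ t in Ioo (0:ℝ) 1, t ^ (s - 1) * (1 - t) ^ (q - 1))
      (∫ t in Ioo (0:ℝ) 1, Real.log t * (t ^ (p - 1) * (1 - t) ^ (q - 1))) p := by
  have hbound_int : Integrable (fun t : ℝ => (p/4)⁻¹ * t ^ (p/4 - 1))
      (volume.restrict (Ioo (0:ℝ) 1)) :=
    (integrableOn_rpow_Ioo (by linarith : (0:ℝ) < p/4)).const_mul _
  have hF_int : Integrable (fun t : ℝ => t ^ (p - 1) * (1 - t) ^ (q - 1))
      (volume.restrict (Ioo (0:ℝ) 1)) := by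
    refine (integrableOn_rpow_Ioo hp).mono' (measAux _ (contOn_beta _ _)) ?_
    filter_upwards [ae_restrict_mem measurableSet_Ioo] with t ht
    have h1 : (0:ℝ) < t := ht.1
    have h2 : (0:ℝ) < 1 - t := by linarith [ht.2]
    rw [Real.norm_eq_abs, abs_of_nonneg (by positivity)]
    calc t ^ (p - 1) * (1 - t) ^ (q - 1) ≤ t ^ (p - 1) * 1 := by
          gcongr
          exact Real.rpow_le_one h2.le (by linarith) (by linarith)
      _ = t ^ (p - 1) := mul_one _
  exact hasDerivAt_integral_of_dominated_loc_of_deriv_le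
    (μ := volume.restrict (Ioo (0:ℝ) 1)) (x₀ := p)
    (F := fun s t => t ^ (s - 1) * (1 - t) ^ (q - 1))
    (F' := fun s t => Real.log t * (t ^ (s - 1) * (1 - t) ^ (q - 1)))
    (bound := fun t => (p/4)⁻¹ * t ^ (p/4 - 1))
    (Metric.ball_mem_nhds p (by positivity : (0:ℝ) < p/2))
    (Filter.Eventually.of_forall fun s => measAux _ (contOn_beta _ _))
    hF_int
    (measAux _ (contOn_logbeta _ _))
    (by
      filter_upwards [ae_restrict_mem measurableSet_Ioo] with t ht s hs
      have h1 : (0:ℝ) < t := ht.1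
      have h2 : t < 1 := ht.2
      have h1t : (0:ℝ) < 1 - t := by linarith
      have hlog : Real.log t ≤ 0 := Real.log_nonpos h1.le h2.le
      have hs1 : p/2 - 1 ≤ s - 1 := by
        have := abs_lt.mp (mem_ball_iff_norm.mp hs)
        linarith [this.1]
      rw [Real.norm_eq_abs, abs_mul,
        abs_of_nonneg (by positivity : (0:ℝ) ≤ t ^ (s-1) * (1-t)^(q-1))]
      calc |Real.log t| * (t ^ (s - 1) * (1 - t) ^ (q - 1))
          ≤ ((p/4)⁻¹ * t ^ (-(p/4))) * (t ^ (p/2 - 1) * 1) := by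
            apply mul_le_mul
            · rw [abs_of_nonpos hlog]
              exact neg_log_le_s9 h1 (by linarith)
            · exact mul_le_mul (Real.rpow_le_rpow_of_exponent_ge h1 h2.le hs1)
                (Real.rpow_le_one h1t.le (by linarith) (by linarith)) (by positivity)
                (by positivity)
            · positivity
            · positivity
        _ = (p/4)⁻¹ * t ^ (p/4 - 1) := by
            rw [mul_one, mul_assoc, ← Real.rpow_add h1,
              show -(p/4) + (p/2 - 1) = p/4 - 1 by ring])
    hbound_int
    (by
      filter_upwards [ae_restrict_mem measurableSet_Ioo] with t ht s hs
      have := (hasDerivAt_rpow_exponent t ht.1 s).mul_const ((1 - t) ^ (q - 1))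
      refine this.congr_deriv ?_
      ring)

end helpers

/-- For `α ≥ 0`, `λ > 0` and `ν > max(1, α/(1+α))`,
`∫₀^∞ u_ν(x) f(x; λ, ν)^(1+α) dx
  = λ^α ν^α B(1+α, (1+α)(ν−1)+1) (1 + ν (ψ((1+α)(ν−1)+1) − ψ((1+α)ν+1)))`. -/
theorem ge_weighted_score_shape_integral (a l v : ℝ) (ha : 0 ≤ a) (hl : 0 < l)
    (hv : max 1 (a / (1 + a)) < v) :
    ∫ x in Ioi (0 : ℝ), geScoreShape l v x * geDensity l v x ^ (1 + a) =
      l ^ a * v ^ a * realBeta (1 + a) ((1 + a) * (v - 1) + 1) *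
        (1 + v * (digamma ((1 + a) * (v - 1) + 1) - digamma ((1 + a) * v + 1))) := by
  have hv1 : (1:ℝ) < v := lt_of_le_of_lt (le_max_left _ _) hv
  have hv0 : (0:ℝ) < v := by linarith
  have hq0 : (0:ℝ) < 1 + a := by linarith
  have hq1 : (1:ℝ) ≤ 1 + a := by linarith
  have hP0 : (0:ℝ) < (1 + a) * (v - 1) + 1 := by nlinarith
  set P : ℝ := (1 + a) * (v - 1) + 1 with hPdef
  -- the substituted integrand
  set g : ℝ → ℝ := fun t =>
    (l ^ a * v ^ (1 + a)) * ((1 / v + Real.log t) * (t ^ ((1 + a) * (v - 1)) * (1 - t) ^ a))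
    with hgdef
  -- substitution x ↦ 1 - exp(-(l x))
  have himg : (fun x => 1 - Real.exp (-(l * x))) '' Ioi 0 = Ioo (0:ℝ) 1 := by
    ext t
    constructor
    · rintro ⟨x, hx, rfl⟩
      have hx0 : (0:ℝ) < x := hx
      have hE1 : Real.exp (-(l * x)) < 1 := by
        rw [Real.exp_lt_one_iff]
        nlinarith
      have hE0 : 0 < Real.exp (-(l * x)) := Real.exp_pos _
      exact ⟨by dsimp only; linarith, by dsimp only; linarith⟩
    · rintro ⟨ht0, ht1⟩
      refine ⟨-Real.log (1 - t) / l, ?_, ?_⟩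
      · have : Real.log (1 - t) < 0 :=
          Real.log_neg (by linarith) (by linarith)
        exact div_pos (by linarith) hl
      · have : -(l * (-Real.log (1 - t) / l)) = Real.log (1 - t) := by
          field_simp
        dsimp only
        rw [this, Real.exp_log (by linarith)]
        ring
  have hderiv : ∀ x ∈ Ioi (0:ℝ), HasDerivWithinAt (fun x => 1 - Real.exp (-(l * x)))
      ((fun x => l * Real.exp (-(l * x))) x) (Ioi 0) x := by
    intro x _
    have h0 : HasDerivAt (fun x : ℝ => -(l * x)) (-l) x := by
      exact (((hasDerivAt_id x).const_mul l).neg).congr_deriv (by ring)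
    have hexp := (Real.hasDerivAt_exp (-(l * x))).comp x h0
    have := (hasDerivAt_const x (1:ℝ)).sub hexp
    refine (HasDerivAt.hasDerivWithinAt ?_)
    refine this.congr_deriv ?_
    ring
  have hinj : InjOn (fun x => 1 - Real.exp (-(l * x))) (Ioi (0:ℝ)) := by
    intro x _ y _ h
    have : Real.exp (-(l * x)) = Real.exp (-(l * y)) := by dsimp at h; linarith
    have := Real.exp_injective this
    have hx : l * x = l * y := by linarith
    exact mul_left_cancel₀ hl.ne' hx
  have hsub := integral_image_eq_integral_abs_deriv_smul measurableSet_Ioi hderiv hinj g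
  rw [himg] at hsub
  -- the pointwise identity
  have hpt : ∀ x ∈ Ioi (0:ℝ),
      |l * Real.exp (-(l * x))| • g (1 - Real.exp (-(l * x))) =
        geScoreShape l v x * geDensity l v x ^ (1 + a) := by
    intro x hx
    have hx0 : (0:ℝ) < x := hx
    have hE0 : 0 < Real.exp (-(l * x)) := Real.exp_pos _
    have hE1 : Real.exp (-(l * x)) < 1 := by
      rw [Real.exp_lt_one_iff]; nlinarith
    have h1E : (0:ℝ) < 1 - Real.exp (-(l * x)) := by linarith
    simp only [smul_eq_mul, hgdef, geScoreShape, geDensity]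
    rw [show (1:ℝ) - (1 - Real.exp (-(l * x))) = Real.exp (-(l * x)) by ring]
    rw [Real.mul_rpow (by positivity) (by positivity),
      Real.mul_rpow (by positivity) (by positivity),
      Real.mul_rpow (by positivity) (by positivity),
      ← Real.rpow_mul h1E.le,
      Real.rpow_add hl 1 a, Real.rpow_one,
      Real.rpow_add hE0 1 a, Real.rpow_one,
      abs_of_pos (by positivity),
      show (v - 1) * (1 + a) = (1 + a) * (v - 1) by ring]
    ring
  rw [setIntegral_congr_fun measurableSet_Ioi hpt] at hsub
  rw [← hsub]
  -- now compute ∫ t in Ioo 0 1, g t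
  have hGd := hasDerivAt_G (p := P) (q := 1 + a) hP0 hq1
  have e1 : P - 1 = (1 + a) * (v - 1) := by rw [hPdef]; ring
  have e2 : (1 + a) - 1 = a := by ring
  rw [e1, e2] at hGd
  have hB := hasDerivAt_realBeta (p := P) (q := 1 + a) hP0 hq0
  have heq : (fun s => ∫ t in Ioo (0:ℝ) 1, t ^ (s - 1) * (1 - t) ^ ((1 + a) - 1))
      =ᶠ[nhds P] (fun s => realBeta s (1 + a)) :=
    Filter.eventually_of_mem (Ioi_mem_nhds hP0) fun s hs => realBeta_integral hs hq0
  rw [e2] at heq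
  have hB' : HasDerivAt (fun s => ∫ t in Ioo (0:ℝ) 1, t ^ (s - 1) * (1 - t) ^ a)
      (realBeta P (1 + a) * (digamma P - digamma (P + (1 + a)))) P :=
    hB.congr_of_eventuallyEq heq
  have hlogint : ∫ t in Ioo (0:ℝ) 1, Real.log t * (t ^ ((1 + a) * (v - 1)) * (1 - t) ^ a) =
      realBeta P (1 + a) * (digamma P - digamma (P + (1 + a))) :=
    hGd.2.unique hB'
  have hbetaint : ∫ t in Ioo (0:ℝ) 1, t ^ ((1 + a) * (v - 1)) * (1 - t) ^ a =
      realBeta P (1 + a) := by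
    have := realBeta_integral hP0 hq0
    rw [e1, e2] at this
    exact this
  have hbeta_integrable : IntegrableOn
      (fun t : ℝ => t ^ ((1 + a) * (v - 1)) * (1 - t) ^ a) (Ioo (0:ℝ) 1) := by
    have : IntegrableOn (fun t : ℝ => t ^ (P - 1) * (1 - t) ^ ((1 + a) - 1)) (Ioo (0:ℝ) 1) := by
      refine (integrableOn_rpow_Ioo hP0).mono' (measAux _ (contOn_beta _ _)) ?_
      filter_upwards [ae_restrict_mem measurableSet_Ioo] with t ht
      have h1 : (0:ℝ) < t := ht.1
      have h2 : (0:ℝ) < 1 - t := by linarith [ht.2]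
      rw [Real.norm_eq_abs, abs_of_nonneg (by positivity)]
      calc t ^ (P - 1) * (1 - t) ^ ((1 + a) - 1) ≤ t ^ (P - 1) * 1 := by
            gcongr
            exact Real.rpow_le_one h2.le (by linarith) (by linarith)
        _ = t ^ (P - 1) := mul_one _
    rwa [e1, e2] at this
  -- split the integral
  have hsplit : ∫ t in Ioo (0:ℝ) 1, g t =
      (l ^ a * v ^ (1 + a)) *
        ((1 / v) * realBeta P (1 + a) +
          realBeta P (1 + a) * (digamma P - digamma (P + (1 + a)))) := by
    rw [hgdef]
    rw [MeasureTheory.integral_const_mul]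
    congr 1
    have : ∀ t : ℝ, (1 / v + Real.log t) * (t ^ ((1 + a) * (v - 1)) * (1 - t) ^ a) =
        (1 / v) * (t ^ ((1 + a) * (v - 1)) * (1 - t) ^ a) +
          Real.log t * (t ^ ((1 + a) * (v - 1)) * (1 - t) ^ a) := fun t => by ring
    simp_rw [this]
    rw [MeasureTheory.integral_add (hbeta_integrable.const_mul _) hGd.1,
      MeasureTheory.integral_const_mul, hbetaint, hlogint]
  rw [hsplit]
  -- final algebra
  rw [realBeta_symm (1 + a) P, show P + (1 + a) = (1 + a) * v + 1 by rw [hPdef]; ring,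
    Real.rpow_add hv0 1 a, Real.rpow_one]
  have hvne : v ≠ 0 := hv0.ne'
  field_simp
end

section
/- (Theorem 1) Let α ≥ 0, ν > 1, and λ > 0. Define J_β(λ, ν) = ∫₀^∞ u(x) u(x)ᵀ f(x; λ, ν)^(1+β) dx, ξ_α(λ, ν) = ∫₀^∞ u(x) f(x; λ, ν)^(1+α) dx, K_α(λ, ν) = J_{2α}(λ, ν) − ξ_α ξ_αᵀ, and the asymptotic covariance matrix Σ_α(λ, ν) = J_α(λ, ν)⁻¹ K_α(λ, ν) J_α(λ, ν)⁻¹, where u(x) = (u_λ(x), u_ν(x))ᵀ is the GE score vector. Assume J_α(1, ν) is invertible. Then: (i) Σ_α(λ, ν)_{11} = λ² Σ_α(1, ν)_{11}; (ii) Σ_α(λ, ν)_{12} = Σ_α(λ, ν)_{21} = λ Σ_α(1, ν)_{12}; (iii) Σ_α(λ, ν)_{22} = Σ_α(1, ν)_{22}, i.e. Σ_{22} is independent of λ. -/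
open Real Set

/-- The GE score vector `u(x) = (u_λ(x), u_ν(x))ᵀ`. -/
noncomputable def geScore (l v x : ℝ) : Fin 2 → ℝ :=
  ![1 / l - x + (v - 1) * x * Real.exp (-(l * x)) / (1 - Real.exp (-(l * x))),
    1 / v + Real.log (1 - Real.exp (-(l * x)))]

/-- `J_β(λ, ν) = ∫₀^∞ u(x) u(x)ᵀ f(x; λ, ν)^(1+β) dx`. -/
noncomputable def geJ (b l v : ℝ) : Matrix (Fin 2) (Fin 2) ℝ :=
  Matrix.of fun i j =>
    ∫ x in Ioi (0 : ℝ), geScore l v x i * geScore l v x j * geDensity l v x ^ (1 + b)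

/-- `ξ_α(λ, ν) = ∫₀^∞ u(x) f(x; λ, ν)^(1+α) dx`. -/
noncomputable def geXi (a l v : ℝ) : Fin 2 → ℝ := fun i =>
  ∫ x in Ioi (0 : ℝ), geScore l v x i * geDensity l v x ^ (1 + a)

/-- `K_α(λ, ν) = J_{2α}(λ, ν) − ξ_α(λ, ν) ξ_α(λ, ν)ᵀ`. -/
noncomputable def geK (a l v : ℝ) : Matrix (Fin 2) (Fin 2) ℝ :=
  geJ (2 * a) l v - Matrix.of fun i j => geXi a l v i * geXi a l v j

/-- The asymptotic covariance matrix `Σ_α(λ, ν) = J_α⁻¹ K_α J_α⁻¹` of the rescaled MDPDE. -/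
noncomputable def geSigma (a l v : ℝ) : Matrix (Fin 2) (Fin 2) ℝ :=
  (geJ a l v)⁻¹ * geK a l v * (geJ a l v)⁻¹

lemma geDensity_scale (l v x : ℝ) : geDensity l v x = l * geDensity 1 v (l * x) := by
  simp [geDensity]; ring

lemma geScore_scale (v x : ℝ) {l : ℝ} (hl : l ≠ 0) (i : Fin 2) :
    geScore l v x i = (![l⁻¹, 1] : Fin 2 → ℝ) i * geScore 1 v (l * x) i := by
  fin_cases i
  · simp only [geScore, Fin.mk_zero, Matrix.cons_val_zero, one_mul, div_eq_mul_inv]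
    linear_combination (x - (v-1)*x*Real.exp (-(l*x)) * (1 - Real.exp (-(l*x)))⁻¹) *
      (inv_mul_cancel₀ hl)
  · simp [geScore]

lemma geDensity_one_nonneg {v : ℝ} (hv : 0 < v) (y : ℝ) (hy : 0 < y) :
    0 ≤ geDensity 1 v y := by
  have h1 : Real.exp (-(1*y)) < 1 := by
    rw [Real.exp_lt_one_iff]; nlinarith
  have h2 : (0:ℝ) ≤ 1 - Real.exp (-(1*y)) := by linarith
  unfold geDensity
  have := Real.rpow_nonneg h2 (v - 1)
  positivity

open MeasureTheory in
lemma geJ_scale (b : ℝ) {v l : ℝ} (hv : 0 < v) (hl : 0 < l) (i j : Fin 2) :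
    geJ b l v i j
      = l ^ b * ((![l⁻¹, 1] : Fin 2 → ℝ) i * ((![l⁻¹, 1] : Fin 2 → ℝ) j * geJ b 1 v i j)) := by
  have key : EqOn (fun x => geScore l v x i * geScore l v x j * geDensity l v x ^ (1+b))
      (fun x => (l ^ (1+b) * (![l⁻¹,1] i * ![l⁻¹,1] j)) *
        ((fun y => geScore 1 v y i * geScore 1 v y j * geDensity 1 v y ^ (1+b)) (l*x)))
      (Ioi 0) := by
    intro x hx
    have hx0 : 0 < l * x := mul_pos hl hx
    simp only
    rw [geScore_scale v x hl.ne' i, geScore_scale v x hl.ne' j, geDensity_scale,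
        Real.mul_rpow hl.le (geDensity_one_nonneg hv _ hx0)]
    ring
  show (∫ x in Ioi (0:ℝ), geScore l v x i * geScore l v x j * geDensity l v x ^ (1+b)) = _
  rw [setIntegral_congr_fun measurableSet_Ioi key, integral_const_mul,
      integral_comp_mul_left_Ioi
        (fun y => geScore 1 v y i * geScore 1 v y j * geDensity 1 v y ^ (1 + b)) 0 hl,
      mul_zero, smul_eq_mul]
  show _ = l ^ b * (![l⁻¹,1] i * (![l⁻¹,1] j *
      ∫ x in Ioi (0:ℝ), geScore 1 v x i * geScore 1 v x j * geDensity 1 v x ^ (1+b)))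
  rw [Real.rpow_add hl, Real.rpow_one]
  field_simp

open MeasureTheory in
lemma geXi_scale (a : ℝ) {v l : ℝ} (hv : 0 < v) (hl : 0 < l) (i : Fin 2) :
    geXi a l v i = l ^ a * ((![l⁻¹, 1] : Fin 2 → ℝ) i * geXi a 1 v i) := by
  have key : EqOn (fun x => geScore l v x i * geDensity l v x ^ (1+a))
      (fun x => (l ^ (1+a) * ![l⁻¹,1] i) *
        ((fun y => geScore 1 v y i * geDensity 1 v y ^ (1+a)) (l*x))) (Ioi 0) := by
    intro x hx
    have hx0 : 0 < l * x := mul_pos hl hx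
    simp only
    rw [geScore_scale v x hl.ne' i, geDensity_scale,
        Real.mul_rpow hl.le (geDensity_one_nonneg hv _ hx0)]
    ring
  show (∫ x in Ioi (0:ℝ), geScore l v x i * geDensity l v x ^ (1+a)) = _
  rw [setIntegral_congr_fun measurableSet_Ioi key, integral_const_mul,
      integral_comp_mul_left_Ioi
        (fun y => geScore 1 v y i * geDensity 1 v y ^ (1 + a)) 0 hl,
      mul_zero, smul_eq_mul]
  show _ = l ^ a * (![l⁻¹,1] i *
      ∫ x in Ioi (0:ℝ), geScore 1 v x i * geDensity 1 v x ^ (1+a))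
  rw [Real.rpow_add hl, Real.rpow_one]
  field_simp

open Matrix in
lemma geJ_symm (b l v : ℝ) : (geJ b l v)ᵀ = geJ b l v := by
  ext i j
  simp only [Matrix.transpose_apply, geJ, Matrix.of_apply]
  congr 1; ext x; ring

open Matrix in
lemma geSigma_symm (a l v : ℝ) : (geSigma a l v)ᵀ = geSigma a l v := by
  have hK : (geK a l v)ᵀ = geK a l v := by
    unfold geK
    rw [Matrix.transpose_sub, geJ_symm]
    congr 1
    ext i j
    simp [mul_comm]
  unfold geSigma
  rw [Matrix.transpose_mul, Matrix.transpose_mul, Matrix.transpose_nonsing_inv, geJ_symm,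
    hK, mul_assoc]

/-- Theorem 1: scaling of the asymptotic covariance matrix `Σ_α(λ, ν)` of the rescaled
MDPDE in the rate parameter `λ`: `Σ₁₁ ∝ λ²`, `Σ₁₂ = Σ₂₁ ∝ λ`, and `Σ₂₂` is independent
of `λ`. -/
theorem geSigma_scaling (a v : ℝ) (ha : 0 ≤ a) (hv : 1 < v)
    (hJ : IsUnit (geJ a 1 v)) :
    ∀ l : ℝ, 0 < l →
      geSigma a l v 0 0 = l ^ 2 * geSigma a 1 v 0 0 ∧
      geSigma a l v 0 1 = l * geSigma a 1 v 0 1 ∧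
      geSigma a l v 1 0 = l * geSigma a 1 v 0 1 ∧
      geSigma a l v 1 1 = geSigma a 1 v 1 1 := by
  intro l hl
  have hv0 : 0 < v := lt_trans one_pos hv
  have hln : l ≠ 0 := hl.ne'
  have hla : (0:ℝ) < l ^ a := Real.rpow_pos_of_pos hl a
  set D : Matrix (Fin 2) (Fin 2) ℝ := Matrix.diagonal ![l⁻¹, 1] with hD
  set E : Matrix (Fin 2) (Fin 2) ℝ := Matrix.diagonal ![l, 1] with hE
  have hED : E * D = 1 := by
    ext i j
    fin_cases i <;> fin_cases j <;>
      simp [hE, hD, Matrix.mul_apply, Fin.sum_univ_two, Matrix.diagonal, Matrix.one_apply,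
        mul_inv_cancel₀ hln]
  have hDE : D * E = 1 := by
    ext i j
    fin_cases i <;> fin_cases j <;>
      simp [hE, hD, Matrix.mul_apply, Fin.sum_univ_two, Matrix.diagonal, Matrix.one_apply,
        inv_mul_cancel₀ hln]
  have hDinv : D⁻¹ = E := Matrix.inv_eq_left_inv hED
  have hDJD : ∀ i j, (D * geJ a 1 v * D) i j
      = (![l⁻¹, 1] : Fin 2 → ℝ) i * ((![l⁻¹, 1] : Fin 2 → ℝ) j * geJ a 1 v i j) := by
    intro i j
    rw [hD, Matrix.mul_diagonal, Matrix.diagonal_mul]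
    ring
  have hJl : geJ a l v = l ^ a • (D * geJ a 1 v * D) := by
    ext i j
    rw [Matrix.smul_apply, geJ_scale a hv0 hl i j, hDJD, smul_eq_mul]
  have hKl : geK a l v = (l ^ a * l ^ a) • (D * geK a 1 v * D) := by
    ext i j
    have h2a : l ^ (2*a) = l ^ a * l ^ a := by
      rw [two_mul, Real.rpow_add hl]
    rw [Matrix.smul_apply, smul_eq_mul, Matrix.mul_diagonal, Matrix.diagonal_mul]
    simp only [geK, Matrix.sub_apply, Matrix.of_apply]
    rw [geJ_scale (2*a) hv0 hl i j, geXi_scale a hv0 hl i, geXi_scale a hv0 hl j, h2a]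
    ring
  have hdetJ : IsUnit (geJ a 1 v).det := (Matrix.isUnit_iff_isUnit_det _).mp hJ
  have hdetP : IsUnit (D * geJ a 1 v * D).det := by
    have hdetD : IsUnit D.det := by
      rw [hD, Matrix.det_diagonal]
      simp [Fin.prod_univ_two, isUnit_iff_ne_zero, hln]
    rw [Matrix.det_mul, Matrix.det_mul]
    exact (hdetD.mul hdetJ).mul hdetD
  haveI : Invertible (l ^ a) := invertibleOfNonzero hla.ne'
  have hJinv : (geJ a l v)⁻¹ = (l ^ a)⁻¹ • (E * (geJ a 1 v)⁻¹ * E) := by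
    rw [hJl, Matrix.inv_smul (k := l ^ a) (h := hdetP), invOf_eq_inv,
      Matrix.mul_inv_rev, Matrix.mul_inv_rev, hDinv]
    rw [mul_assoc]
  have hSigma : geSigma a l v = E * geSigma a 1 v * E := by
    unfold geSigma
    rw [hJinv, hKl]
    rw [Matrix.smul_mul, Matrix.mul_smul, Matrix.smul_mul, Matrix.mul_smul, Matrix.smul_mul,
      smul_smul, smul_smul]
    have hsc : (l ^ a)⁻¹ * (l ^ a)⁻¹ * (l ^ a * l ^ a) = 1 := by
      field_simp
    rw [hsc, one_smul]
    have h1 : E * (geJ a 1 v)⁻¹ * E * (D * geK a 1 v * D) * (E * (geJ a 1 v)⁻¹ * E)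
        = E * ((geJ a 1 v)⁻¹ * (E * D) * geK a 1 v * (D * E) * (geJ a 1 v)⁻¹) * E := by
      noncomm_ring
    rw [h1, hED, hDE, mul_one, mul_one]
  have hent : ∀ i j, (E * geSigma a 1 v * E) i j
      = (![l, 1] : Fin 2 → ℝ) i * geSigma a 1 v i j * (![l, 1] : Fin 2 → ℝ) j := by
    intro i j
    rw [hE, Matrix.mul_diagonal, Matrix.diagonal_mul]
  have hsymm : geSigma a 1 v 1 0 = geSigma a 1 v 0 1 := by
    have h := geSigma_symm a 1 v
    have h2 : Matrix.transpose (geSigma a 1 v) 0 1 = geSigma a 1 v 0 1 := by rw [h]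
    rw [← h2, Matrix.transpose_apply]
  refine ⟨?_, ?_, ?_, ?_⟩ <;> rw [hSigma, hent]
  · simp; ring
  · simp
  · simp [hsymm]; ring
  · simp
end
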